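/- (Bilinearization of the two-dimensional Toda–Heisenberg lattice.) Let J₁, J₂ be nonzero real numbers, a, b ∈ ℝ, c a nonzero complex number with c² = −J₁J₂e^{2a}, and μ = c/(J₁e^{a+b}). Let τ : ℤ² → ℝ be everywhere positive, σ : ℤ² → ℂ, and set ρ = −conj(σ). Assume that at every point A ∈ ℤ²: (1) τ_A² − τ_N τ_S − σ_A ρ_A = 0; (2) σ_A τ_L − σ_L τ_A + μ(σ_S τ_W − σ_W τ_S) = 0 and ρ_A τ_L − ρ_L τ_A + μ(ρ_S τ_W − ρ_W τ_S) = 0; (3) σ_A τ_U − σ_U τ_A + μ⁻¹(σ_N τ_W − σ_W τ_N) = 0 and ρ_A τ_U − ρ_U τ_A + μ⁻¹(ρ_N τ_W − ρ_W τ_N) = 0; (4) σ_A ρ_W + σ_W ρ_A + μ τ_U τ_S + μ⁻¹ τ_L τ_N − (μ + μ⁻¹) τ_A τ_W = 0. Define u_A = am + bn + (1/2)·ln(τ_S/τ_N) at A = (m,n), q = σ/τ, and φ_B = φ(q_B). Then for every A ∈ ℤ², with ε_R = ε_U = 1, ε_L = ε_D = −1, J_R = J_L = J₁, J_U = J_D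 = J₂, the field equations hold: Σ_{B∈{R,U,L,D}} ε_B J_B exp(ε_B(u_A − u_B)) ⟨φ_A, φ_B⟩ = 0 and Σ_{B∈{R,U,L,D}} J_B exp(ε_B(u_A − u_B)) (φ_A × φ_B) = 0, with the inner product and cross product of ℝ³. -/

import Mathlib

open Matrix

/-- `p q = 1 + |q|²`. -/
noncomputable def pfun (q : ℂ) : ℝ := 1 + ‖q‖ ^ 2

/-- `φ(q) = (Re q, Im q, 1)/√(1+|q|²)` as a vector of `ℝ³`. -/
noncomputable def phi (q : ℂ) : Fin 3 → ℝ :=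
  (Real.sqrt (pfun q))⁻¹ • ![q.re, q.im, 1]

lemma pfun_pos (q : ℂ) : 0 < pfun q := by unfold pfun; positivity

lemma dot_phi (q1 q2 : ℂ) :
    phi q1 ⬝ᵥ phi q2
      = (1 + (q1 * (starRingEnd ℂ) q2).re) / (Real.sqrt (pfun q1) * Real.sqrt (pfun q2)) := by
  have h1 : Real.sqrt (pfun q1) ≠ 0 := (Real.sqrt_pos.2 (pfun_pos q1)).ne'
  have h2 : Real.sqrt (pfun q2) ≠ 0 := (Real.sqrt_pos.2 (pfun_pos q2)).ne'
  simp only [phi, dotProduct, Fin.sum_univ_three, Pi.smul_apply, smul_eq_mul,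
    Matrix.cons_val_zero, Matrix.cons_val_one, Matrix.head_cons, Complex.mul_re,
    Complex.conj_re, Complex.conj_im, Matrix.cons_val_two, Matrix.tail_cons]
  field_simp
  ring

lemma cross_phi (q1 q2 : ℂ) :
    crossProduct (phi q1) (phi q2)
      = (Real.sqrt (pfun q1) * Real.sqrt (pfun q2))⁻¹ •
          ![q1.im - q2.im, q2.re - q1.re, q1.re * q2.im - q1.im * q2.re] := by
  funext i
  fin_cases i <;>
    simp [phi, cross_apply, Matrix.cons_val_zero, Matrix.cons_val_one, Matrix.head_cons] <;>
    ring

lemma coeff_eq (J E Y tN tS tBN tBS t0 tB : ℝ) (htN : 0 < tN) (htS : 0 < tS)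
    (htBN : 0 < tBN) (htBS : 0 < tBS) (ht0 : 0 < t0) (htB : 0 < tB) :
    J * Real.exp (E + 1 / 2 * Real.log (tS / tN) - 1 / 2 * Real.log (tBS / tBN)) *
      (Y / (Real.sqrt (tN * tS / t0 ^ 2) * Real.sqrt (tBN * tBS / tB ^ 2)))
    = J * Real.exp E * (t0 * tB * Y) / (tN * tBS) := by
  have e1 : Real.exp (1 / 2 * Real.log (tS / tN)) = Real.sqrt tS / Real.sqrt tN := by
    rw [show 1 / 2 * Real.log (tS / tN) = Real.log (tS / tN) / 2 by ring,
      ← Real.log_sqrt (by positivity), Real.exp_log (by positivity),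
      Real.sqrt_div htS.le]
  have e2 : Real.exp (1 / 2 * Real.log (tBS / tBN)) = Real.sqrt tBS / Real.sqrt tBN := by
    rw [show 1 / 2 * Real.log (tBS / tBN) = Real.log (tBS / tBN) / 2 by ring,
      ← Real.log_sqrt (by positivity), Real.exp_log (by positivity),
      Real.sqrt_div htBS.le]
  have s1 : Real.sqrt (tN * tS / t0 ^ 2) = Real.sqrt tN * Real.sqrt tS / t0 := by
    rw [Real.sqrt_div (by positivity), Real.sqrt_sq ht0.le, Real.sqrt_mul htN.le]
  have s2 : Real.sqrt (tBN * tBS / tB ^ 2) = Real.sqrt tBN * Real.sqrt tBS / tB := by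
    rw [Real.sqrt_div (by positivity), Real.sqrt_sq htB.le, Real.sqrt_mul htBN.le]
  have n1 : Real.sqrt tN ≠ 0 := (Real.sqrt_pos.2 htN).ne'
  have n2 : Real.sqrt tS ≠ 0 := (Real.sqrt_pos.2 htS).ne'
  have n3 : Real.sqrt tBN ≠ 0 := (Real.sqrt_pos.2 htBN).ne'
  have n4 : Real.sqrt tBS ≠ 0 := (Real.sqrt_pos.2 htBS).ne'
  rw [Real.exp_sub, Real.exp_add, e1, e2, s1, s2]
  conv_rhs => rw [← Real.mul_self_sqrt htN.le, ← Real.mul_self_sqrt htBS.le]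
  field_simp

set_option maxHeartbeats 3000000 in
/-- Bilinearization of the two-dimensional Toda–Heisenberg lattice: solutions of the
bilinear system (1)–(4) give solutions of the field equations.  Lattice convention: at
`A = (m,n)` the neighbours are `S = (m+1,n)`, `N = (m−1,n)`, `W = (m,n+1)`, `E = (m,n−1)`,
`L = (m+1,n+1)`, `R = (m−1,n−1)`, `U = (m−1,n+1)`, `D = (m+1,n−1)`. -/
theorem stmt9 (J₁ J₂ a b : ℝ) (c μ : ℂ) (hJ₁ : J₁ ≠ 0) (hJ₂ : J₂ ≠ 0) (hc : c ≠ 0)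
    (hc2 : c ^ 2 = -(J₁ * J₂ * Real.exp (2 * a) : ℝ))
    (hμ : μ = c / (J₁ * Real.exp (a + b) : ℝ))
    (τ : ℤ × ℤ → ℝ) (hτ : ∀ A, 0 < τ A)
    (σ ρ : ℤ × ℤ → ℂ) (hρ : ∀ A, ρ A = -(starRingEnd ℂ) (σ A))
    (h1 : ∀ m n : ℤ, ((τ (m, n) : ℂ)) ^ 2 - (τ (m - 1, n) : ℂ) * (τ (m + 1, n) : ℂ)
      - σ (m, n) * ρ (m, n) = 0)
    (h2σ : ∀ m n : ℤ, σ (m, n) * (τ (m + 1, n + 1) : ℂ) - σ (m + 1, n + 1) * (τ (m, n) : ℂ)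
      + μ * (σ (m + 1, n) * (τ (m, n + 1) : ℂ) - σ (m, n + 1) * (τ (m + 1, n) : ℂ)) = 0)
    (h2ρ : ∀ m n : ℤ, ρ (m, n) * (τ (m + 1, n + 1) : ℂ) - ρ (m + 1, n + 1) * (τ (m, n) : ℂ)
      + μ * (ρ (m + 1, n) * (τ (m, n + 1) : ℂ) - ρ (m, n + 1) * (τ (m + 1, n) : ℂ)) = 0)
    (h3σ : ∀ m n : ℤ, σ (m, n) * (τ (m - 1, n + 1) : ℂ) - σ (m - 1, n + 1) * (τ (m, n) : ℂ)
      + μ⁻¹ * (σ (m - 1, n) * (τ (m, n + 1) : ℂ) - σ (m, n + 1) * (τ (m - 1, n) : ℂ)) = 0)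
    (h3ρ : ∀ m n : ℤ, ρ (m, n) * (τ (m - 1, n + 1) : ℂ) - ρ (m - 1, n + 1) * (τ (m, n) : ℂ)
      + μ⁻¹ * (ρ (m - 1, n) * (τ (m, n + 1) : ℂ) - ρ (m, n + 1) * (τ (m - 1, n) : ℂ)) = 0)
    (h4 : ∀ m n : ℤ, σ (m, n) * ρ (m, n + 1) + σ (m, n + 1) * ρ (m, n)
      + μ * (τ (m - 1, n + 1) : ℂ) * (τ (m + 1, n) : ℂ)
      + μ⁻¹ * (τ (m + 1, n + 1) : ℂ) * (τ (m - 1, n) : ℂ)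
      - (μ + μ⁻¹) * (τ (m, n) : ℂ) * (τ (m, n + 1) : ℂ) = 0)
    (u : ℤ × ℤ → ℝ) (q : ℤ × ℤ → ℂ)
    (hu : ∀ m n : ℤ, u (m, n)
      = a * m + b * n + (1 / 2) * Real.log (τ (m + 1, n) / τ (m - 1, n)))
    (hq : ∀ A, q A = σ A / (τ A : ℂ)) :
    ∀ m n : ℤ,
      (J₁ * Real.exp (u (m, n) - u (m - 1, n - 1)) * (phi (q (m, n)) ⬝ᵥ phi (q (m - 1, n - 1)))
        + J₂ * Real.exp (u (m, n) - u (m - 1, n + 1)) * (phi (q (m, n)) ⬝ᵥ phi (q (m - 1, n + 1)))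
        - J₁ * Real.exp (-(u (m, n) - u (m + 1, n + 1))) * (phi (q (m, n)) ⬝ᵥ phi (q (m + 1, n + 1)))
        - J₂ * Real.exp (-(u (m, n) - u (m + 1, n - 1))) * (phi (q (m, n)) ⬝ᵥ phi (q (m + 1, n - 1)))
        = 0) ∧
      ((J₁ * Real.exp (u (m, n) - u (m - 1, n - 1))) •
          crossProduct (phi (q (m, n))) (phi (q (m - 1, n - 1)))
        + (J₂ * Real.exp (u (m, n) - u (m - 1, n + 1))) •
          crossProduct (phi (q (m, n))) (phi (q (m - 1, n + 1)))
        + (J₁ * Real.exp (-(u (m, n) - u (m + 1, n + 1)))) •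
          crossProduct (phi (q (m, n))) (phi (q (m + 1, n + 1)))
        + (J₂ * Real.exp (-(u (m, n) - u (m + 1, n - 1)))) •
          crossProduct (phi (q (m, n))) (phi (q (m + 1, n - 1)))
        = 0) := by
  intro m n
  have hτne : ∀ A : ℤ × ℤ, τ A ≠ 0 := fun A => (hτ A).ne'
  have hτcne : ∀ A : ℤ × ℤ, (τ A : ℂ) ≠ 0 := fun A => Complex.ofReal_ne_zero.2 (hτ A).ne'
  have hμ0 : μ ≠ 0 := by
    rw [hμ]
    exact div_ne_zero hc (Complex.ofReal_ne_zero.2 (mul_ne_zero hJ₁ (Real.exp_ne_zero _)))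
  have hμinv : μ * μ⁻¹ = 1 := mul_inv_cancel₀ hμ0
  have hden : ((J₁ * Real.exp (a + b) : ℝ) : ℂ) ≠ 0 :=
    Complex.ofReal_ne_zero.2 (mul_ne_zero hJ₁ (Real.exp_ne_zero _))
  have hμd : μ * ((J₁ * Real.exp (a + b) : ℝ) : ℂ) = c := by
    rw [hμ]; exact div_mul_cancel₀ c hden
  have hκ : (J₂ : ℂ) * ((Real.exp (a - b) : ℝ) : ℂ) = -μ ^ 2 * ((J₁ : ℂ) * ((Real.exp (a + b) : ℝ) : ℂ)) := by
    have hee : Real.exp (a - b) * (Real.exp (a + b) * Real.exp (a + b))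
        = Real.exp (2 * a) * Real.exp (a + b) := by
      rw [← Real.exp_add (a + b) (a + b), ← Real.exp_add (a - b) _, ← Real.exp_add (2 * a) (a + b)]
      congr 1; ring
    have heec : ((Real.exp (a - b) : ℝ) : ℂ) * (((Real.exp (a + b) : ℝ) : ℂ) * ((Real.exp (a + b) : ℝ) : ℂ))
        = ((Real.exp (2 * a) : ℝ) : ℂ) * ((Real.exp (a + b) : ℝ) : ℂ) := by exact_mod_cast hee
    have h2 : μ ^ 2 * ((J₁ * Real.exp (a + b) : ℝ) : ℂ) ^ 2
        = -((J₁ * J₂ * Real.exp (2 * a) : ℝ) : ℂ) := by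
      rw [← hc2, ← hμd]; ring
    rw [Complex.ofReal_mul, Complex.ofReal_mul, Complex.ofReal_mul] at h2
    apply mul_right_cancel₀ (pow_ne_zero 2 hden)
    rw [Complex.ofReal_mul]
    linear_combination ((J₁ : ℂ) * ((Real.exp (a + b) : ℝ) : ℂ)) * h2 + ((J₁ : ℂ) ^ 2 * (J₂ : ℂ)) * heec
  have hpf : ∀ m' n' : ℤ, pfun (q (m', n')) = τ (m' - 1, n') * τ (m' + 1, n') / τ (m', n') ^ 2 := by
    intro m' n'
    have hz : σ (m', n') * (starRingEnd ℂ) (σ (m', n')) = (Complex.normSq (σ (m', n')) : ℂ) :=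
      Complex.mul_conj _
    have h := h1 m' n'
    rw [hρ (m', n')] at h
    have hns : Complex.normSq (σ (m', n'))
        = τ (m' - 1, n') * τ (m' + 1, n') - τ (m', n') ^ 2 := by
      rw [← Complex.ofReal_inj]
      push_cast
      linear_combination h - hz
    rw [hq (m', n')]
    unfold pfun
    rw [norm_div, Complex.norm_real, Real.norm_eq_abs, abs_of_pos (hτ _), div_pow, Complex.sq_norm, hns]
    field_simp [(hτ (m', n')).ne']
    ring
  have hp0 := hpf m n
  have hpR := hpf (m - 1) (n - 1)
  have hpU := hpf (m - 1) (n + 1)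
  have hpL := hpf (m + 1) (n + 1)
  have hpD := hpf (m + 1) (n - 1)
  simp only [show (m : ℤ) - 1 + 1 = m from by omega] at hpR hpU
  simp only [show (m : ℤ) + 1 - 1 = m from by omega] at hpL hpD
  have hA1 := h1 m n
  have hA2s := h2σ m n
  have hA2r := h2ρ m n
  have hR2s := h2σ (m - 1) (n - 1)
  have hR2r := h2ρ (m - 1) (n - 1)
  have hA3s := h3σ m n
  have hA3r := h3ρ m n
  have hD3s := h3σ (m + 1) (n - 1)
  have hD3r := h3ρ (m + 1) (n - 1)
  have hH4A := h4 m n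
  have hH4E := h4 m (n - 1)
  simp only [show (m : ℤ) - 1 + 1 = m from by omega, show (n : ℤ) - 1 + 1 = n from by omega,
    show (m : ℤ) + 1 - 1 = m from by omega] at hR2s hR2r hD3s hD3r hH4E
  have hA3s' : μ * ((σ (m, n)) * (τ (m - 1, n + 1) : ℂ) - (σ (m - 1, n + 1)) * (τ (m, n) : ℂ)) + ((σ (m - 1, n)) * (τ (m, n + 1) : ℂ) - (σ (m, n + 1)) * (τ (m - 1, n) : ℂ)) = 0 := by
    linear_combination μ * hA3s - ((σ (m - 1, n)) * (τ (m, n + 1) : ℂ) - (σ (m, n + 1)) * (τ (m - 1, n) : ℂ)) * hμinv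
  have hA3r' : μ * ((ρ (m, n)) * (τ (m - 1, n + 1) : ℂ) - (ρ (m - 1, n + 1)) * (τ (m, n) : ℂ)) + (ρ (m - 1, n) * (τ (m, n + 1) : ℂ) - ρ (m, n + 1) * (τ (m - 1, n) : ℂ)) = 0 := by
    linear_combination μ * hA3r - (ρ (m - 1, n) * (τ (m, n + 1) : ℂ) - ρ (m, n + 1) * (τ (m - 1, n) : ℂ)) * hμinv
  have hD3s' : μ * ((σ (m + 1, n - 1)) * (τ (m, n) : ℂ) - (σ (m, n)) * (τ (m + 1, n - 1) : ℂ)) + ((σ (m, n - 1)) * (τ (m + 1, n) : ℂ) - (σ (m + 1, n)) * (τ (m, n - 1) : ℂ)) = 0 := by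
    linear_combination μ * hD3s - ((σ (m, n - 1)) * (τ (m + 1, n) : ℂ) - (σ (m + 1, n)) * (τ (m, n - 1) : ℂ)) * hμinv
  have hD3r' : μ * ((ρ (m + 1, n - 1)) * (τ (m, n) : ℂ) - (ρ (m, n)) * (τ (m + 1, n - 1) : ℂ)) + (ρ (m, n - 1) * (τ (m + 1, n) : ℂ) - ρ (m + 1, n) * (τ (m, n - 1) : ℂ)) = 0 := by
    linear_combination μ * hD3r - (ρ (m, n - 1) * (τ (m + 1, n) : ℂ) - ρ (m + 1, n) * (τ (m, n - 1) : ℂ)) * hμinv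
  have hH4A' : μ * ((σ (m, n)) * ρ (m, n + 1) + (σ (m, n + 1)) * (ρ (m, n))) + μ ^ 2 * (τ (m - 1, n + 1) : ℂ) * (τ (m + 1, n) : ℂ) + (τ (m + 1, n + 1) : ℂ) * (τ (m - 1, n) : ℂ)
      - (μ ^ 2 + 1) * (τ (m, n) : ℂ) * (τ (m, n + 1) : ℂ) = 0 := by
    linear_combination μ * hH4A - ((τ (m + 1, n + 1) : ℂ) * (τ (m - 1, n) : ℂ) - (τ (m, n) : ℂ) * (τ (m, n + 1) : ℂ)) * hμinv
  have hH4E' : μ * ((σ (m, n - 1)) * (ρ (m, n)) + (σ (m, n)) * ρ (m, n - 1)) + μ ^ 2 * (τ (m - 1, n) : ℂ) * (τ (m + 1, n - 1) : ℂ) + (τ (m + 1, n) : ℂ) * (τ (m - 1, n - 1) : ℂ)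
      - (μ ^ 2 + 1) * (τ (m, n - 1) : ℂ) * (τ (m, n) : ℂ) = 0 := by
    linear_combination μ * hH4E - ((τ (m + 1, n) : ℂ) * (τ (m - 1, n - 1) : ℂ) - (τ (m, n - 1) : ℂ) * (τ (m, n) : ℂ)) * hμinv
  have hGc : (τ (m, n) : ℂ) * ((τ (m + 1, n) : ℂ) * (τ (m, n + 1) : ℂ) * ((τ (m, n) : ℂ) * (τ (m - 1, n - 1) : ℂ) - ((σ (m, n)) * (ρ (m - 1, n - 1)) + (σ (m - 1, n - 1)) * (ρ (m, n))) / 2) - (τ (m - 1, n) : ℂ) * (τ (m, n - 1) : ℂ) * ((τ (m, n) : ℂ) * (τ (m + 1, n + 1) : ℂ) - ((σ (m, n)) * (ρ (m + 1, n + 1)) + (σ (m + 1, n + 1)) * (ρ (m, n))) / 2)) - μ ^ 2 * (τ (m, n) : ℂ) * ((τ (m + 1, n) : ℂ) * (τ (m, n - 1) : ℂ) * ((τ (m, n) : ℂ) * (τ (m - 1, n + 1) : ℂ) - ((σ (m, n)) * (ρ (m - 1, n + 1)) + (σ (m - 1, n + 1)) * (ρ (m, n))) / 2) - (τ (m - 1,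 n) : ℂ) * (τ (m, n + 1) : ℂ) * ((τ (m, n) : ℂ) * (τ (m + 1, n - 1) : ℂ) - ((σ (m, n)) * (ρ (m + 1, n - 1)) + (σ (m + 1, n - 1)) * (ρ (m, n))) / 2)) = 0 := by
    linear_combination ((τ (m + 1, n) : ℂ) * (τ (m, n + 1) : ℂ) * (τ (m - 1, n - 1) : ℂ) - (τ (m - 1, n) : ℂ) * (τ (m, n - 1) : ℂ) * (τ (m + 1, n + 1) : ℂ) - μ ^ 2 * (τ (m + 1, n) : ℂ) * (τ (m, n - 1) : ℂ) * (τ (m - 1, n + 1) : ℂ)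
        + μ ^ 2 * (τ (m - 1, n) : ℂ) * (τ (m, n + 1) : ℂ) * (τ (m + 1, n - 1) : ℂ)) * hA1
      - (τ (m + 1, n) : ℂ) * (τ (m, n + 1) : ℂ) / 2 * (σ (m, n)) * hR2r - (τ (m + 1, n) : ℂ) * (τ (m, n + 1) : ℂ) / 2 * (ρ (m, n)) * hR2s
      - (τ (m - 1, n) : ℂ) * (τ (m, n - 1) : ℂ) / 2 * (σ (m, n)) * hA2r - (τ (m - 1, n) : ℂ) * (τ (m, n - 1) : ℂ) / 2 * (ρ (m, n)) * hA2s
      - μ * (τ (m + 1, n) : ℂ) * (τ (m, n - 1) : ℂ) / 2 * (σ (m, n)) * hA3r' - μ * (τ (m + 1, n) : ℂ) * (τ (m, n - 1) : ℂ) / 2 * (ρ (m, n)) * hA3s'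
      - μ * (τ (m - 1, n) : ℂ) * (τ (m, n + 1) : ℂ) / 2 * (σ (m, n)) * hD3r' - μ * (τ (m - 1, n) : ℂ) * (τ (m, n + 1) : ℂ) / 2 * (ρ (m, n)) * hD3s'
      + (τ (m - 1, n) : ℂ) * (τ (m + 1, n) : ℂ) * (τ (m, n + 1) : ℂ) * hH4E' - (τ (m - 1, n) : ℂ) * (τ (m + 1, n) : ℂ) * (τ (m, n - 1) : ℂ) * hH4A'
  have hGv : (τ (m + 1, n) : ℂ) * (τ (m, n + 1) : ℂ) * ((σ (m - 1, n - 1)) * (τ (m, n) : ℂ) - (σ (m, n)) * (τ (m - 1, n - 1) : ℂ)) + (τ (m - 1, n) : ℂ) * (τ (m, n - 1) : ℂ) * ((σ (m + 1, n + 1)) * (τ (m, n) : ℂ) - (σ (m, n)) * (τ (m + 1, n + 1) : ℂ)) - μ ^ 2 * ((τ (m + 1, n) : ℂ) * (τ (m, n - 1) : ℂ) * ((σ (m - 1, n + 1)) * (τ (m, n) : ℂ) - (σ (m, n)) * (τ (m - 1, n + 1) : ℂ)) + (τ (m - 1, n) : ℂ) * (τ (m, n + 1) : ℂ) * ((σ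 (m + 1, n - 1)) * (τ (m, n) : ℂ) - (σ (m, n)) * (τ (m + 1, n - 1) : ℂ))) = 0 := by
    linear_combination (τ (m + 1, n) : ℂ) * (τ (m, n + 1) : ℂ) * hR2s - (τ (m - 1, n) : ℂ) * (τ (m, n - 1) : ℂ) * hA2s + μ * (τ (m + 1, n) : ℂ) * (τ (m, n - 1) : ℂ) * hA3s'
      - μ * (τ (m - 1, n) : ℂ) * (τ (m, n + 1) : ℂ) * hD3s'
  have eR : u (m, n) - u (m - 1, n - 1)
      = a + b + 1 / 2 * Real.log ((τ (m + 1, n)) / (τ (m - 1, n))) - 1 / 2 * Real.log ((τ (m, n - 1)) / (τ (m - 1 - 1, n - 1))) := by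
    rw [hu m n, hu (m - 1) (n - 1)]
    simp only [show (m : ℤ) - 1 + 1 = m from by omega]
    push_cast; ring
  have eU : u (m, n) - u (m - 1, n + 1)
      = a - b + 1 / 2 * Real.log ((τ (m + 1, n)) / (τ (m - 1, n))) - 1 / 2 * Real.log ((τ (m, n + 1)) / (τ (m - 1 - 1, n + 1))) := by
    rw [hu m n, hu (m - 1) (n + 1)]
    simp only [show (m : ℤ) - 1 + 1 = m from by omega]
    push_cast; ring
  have eL : -(u (m, n) - u (m + 1, n + 1))
      = a + b + 1 / 2 * Real.log ((τ (m + 1 + 1, n + 1)) / (τ (m, n + 1))) - 1 / 2 * Real.log ((τ (m + 1, n)) / (τ (m - 1, n))) := by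
    rw [hu m n, hu (m + 1) (n + 1)]
    simp only [show (m : ℤ) + 1 - 1 = m from by omega]
    push_cast; ring
  have eD : -(u (m, n) - u (m + 1, n - 1))
      = a - b + 1 / 2 * Real.log ((τ (m + 1 + 1, n - 1)) / (τ (m, n - 1))) - 1 / 2 * Real.log ((τ (m + 1, n)) / (τ (m - 1, n))) := by
    rw [hu m n, hu (m + 1) (n - 1)]
    simp only [show (m : ℤ) + 1 - 1 = m from by omega]
    push_cast; ring
  have hqre : ∀ B : ℤ × ℤ, (q (m, n) * (starRingEnd ℂ) (q B)).re
      = (σ (m, n) * (starRingEnd ℂ) (σ B)).re / (τ (m, n) * τ B) := by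
    intro B
    rw [hq (m, n), hq B, map_div₀, Complex.conj_ofReal, div_mul_div_comm,
      show ((τ (m, n) : ℂ) * (τ B : ℂ)) = ((τ (m, n) * τ B : ℝ) : ℂ) by push_cast; ring,
      Complex.div_ofReal_re]
  have hre : ∀ B : ℤ × ℤ, (((σ (m, n) * (starRingEnd ℂ) (σ B)).re : ℝ) : ℂ)
      = -(σ (m, n) * ρ B + ρ (m, n) * σ B) / 2 := by
    intro B
    have h := Complex.add_conj (σ (m, n) * (starRingEnd ℂ) (σ B))
    rw [_root_.map_mul, Complex.conj_conj] at h
    push_cast at h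
    rw [hρ (m, n), hρ B]
    linear_combination (-1 / 2 : ℂ) * h
  constructor
  · have TR : J₁ * Real.exp (u (m, n) - u (m - 1, n - 1)) * (phi (q (m, n)) ⬝ᵥ phi (q (m - 1, n - 1)))
        = J₁ * Real.exp (a + b) * ((τ (m, n)) * (τ (m - 1, n - 1)) + (σ (m, n) * (starRingEnd ℂ) (σ (m - 1, n - 1))).re)
          / ((τ (m - 1, n)) * (τ (m, n - 1))) := by
      rw [dot_phi, hqre (m - 1, n - 1), hp0, hpR, eR,
        coeff_eq J₁ (a + b)
          (1 + (σ (m, n) * (starRingEnd ℂ) (σ (m - 1, n - 1))).re / ((τ (m, n)) * (τ (m - 1, n - 1))))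
          (τ (m - 1, n)) (τ (m + 1, n)) (τ (m - 1 - 1, n - 1)) (τ (m, n - 1)) (τ (m, n)) (τ (m - 1, n - 1)) (hτ _) (hτ _) (hτ _) (hτ _) (hτ _) (hτ _),
        show (τ (m, n)) * (τ (m - 1, n - 1)) * (1 + (σ (m, n) * (starRingEnd ℂ) (σ (m - 1, n - 1))).re / ((τ (m, n)) * (τ (m - 1, n - 1))))
          = (τ (m, n)) * (τ (m - 1, n - 1)) + (σ (m, n) * (starRingEnd ℂ) (σ (m - 1, n - 1))).re from by
            field_simp [(hτ (m, n)).ne', (hτ (m - 1, n - 1)).ne']]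
    have TU : J₂ * Real.exp (u (m, n) - u (m - 1, n + 1)) * (phi (q (m, n)) ⬝ᵥ phi (q (m - 1, n + 1)))
        = J₂ * Real.exp (a - b) * ((τ (m, n)) * (τ (m - 1, n + 1)) + (σ (m, n) * (starRingEnd ℂ) (σ (m - 1, n + 1))).re)
          / ((τ (m - 1, n)) * (τ (m, n + 1))) := by
      rw [dot_phi, hqre (m - 1, n + 1), hp0, hpU, eU,
        coeff_eq J₂ (a - b)
          (1 + (σ (m, n) * (starRingEnd ℂ) (σ (m - 1, n + 1))).re / ((τ (m, n)) * (τ (m - 1, n + 1))))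
          (τ (m - 1, n)) (τ (m + 1, n)) (τ (m - 1 - 1, n + 1)) (τ (m, n + 1)) (τ (m, n)) (τ (m - 1, n + 1)) (hτ _) (hτ _) (hτ _) (hτ _) (hτ _) (hτ _),
        show (τ (m, n)) * (τ (m - 1, n + 1)) * (1 + (σ (m, n) * (starRingEnd ℂ) (σ (m - 1, n + 1))).re / ((τ (m, n)) * (τ (m - 1, n + 1))))
          = (τ (m, n)) * (τ (m - 1, n + 1)) + (σ (m, n) * (starRingEnd ℂ) (σ (m - 1, n + 1))).re from by
            field_simp [(hτ (m, n)).ne', (hτ (m - 1, n + 1)).ne']]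
    have TL : J₁ * Real.exp (-(u (m, n) - u (m + 1, n + 1))) * (phi (q (m, n)) ⬝ᵥ phi (q (m + 1, n + 1)))
        = J₁ * Real.exp (a + b) * ((τ (m, n)) * (τ (m + 1, n + 1)) + (σ (m, n) * (starRingEnd ℂ) (σ (m + 1, n + 1))).re)
          / ((τ (m, n + 1)) * (τ (m + 1, n))) := by
      rw [dot_phi, hqre (m + 1, n + 1), hp0, hpL, eL,
        mul_comm (Real.sqrt ((τ (m - 1, n)) * (τ (m + 1, n)) / (τ (m, n)) ^ 2)) (Real.sqrt ((τ (m, n + 1)) * (τ (m + 1 + 1, n + 1)) / (τ (m + 1, n + 1)) ^ 2)),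
        coeff_eq J₁ (a + b)
          (1 + (σ (m, n) * (starRingEnd ℂ) (σ (m + 1, n + 1))).re / ((τ (m, n)) * (τ (m + 1, n + 1))))
          (τ (m, n + 1)) (τ (m + 1 + 1, n + 1)) (τ (m - 1, n)) (τ (m + 1, n)) (τ (m + 1, n + 1)) (τ (m, n)) (hτ _) (hτ _) (hτ _) (hτ _) (hτ _) (hτ _),
        show (τ (m + 1, n + 1)) * (τ (m, n)) * (1 + (σ (m, n) * (starRingEnd ℂ) (σ (m + 1, n + 1))).re / ((τ (m, n)) * (τ (m + 1, n + 1))))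
          = (τ (m, n)) * (τ (m + 1, n + 1)) + (σ (m, n) * (starRingEnd ℂ) (σ (m + 1, n + 1))).re from by
            field_simp [(hτ (m, n)).ne', (hτ (m + 1, n + 1)).ne']]
    have TD : J₂ * Real.exp (-(u (m, n) - u (m + 1, n - 1))) * (phi (q (m, n)) ⬝ᵥ phi (q (m + 1, n - 1)))
        = J₂ * Real.exp (a - b) * ((τ (m, n)) * (τ (m + 1, n - 1)) + (σ (m, n) * (starRingEnd ℂ) (σ (m + 1, n - 1))).re)
          / ((τ (m, n - 1)) * (τ (m + 1, n))) := by
      rw [dot_phi, hqre (m + 1, n - 1), hp0, hpD, eD,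
        mul_comm (Real.sqrt ((τ (m - 1, n)) * (τ (m + 1, n)) / (τ (m, n)) ^ 2)) (Real.sqrt ((τ (m, n - 1)) * (τ (m + 1 + 1, n - 1)) / (τ (m + 1, n - 1)) ^ 2)),
        coeff_eq J₂ (a - b)
          (1 + (σ (m, n) * (starRingEnd ℂ) (σ (m + 1, n - 1))).re / ((τ (m, n)) * (τ (m + 1, n - 1))))
          (τ (m, n - 1)) (τ (m + 1 + 1, n - 1)) (τ (m - 1, n)) (τ (m + 1, n)) (τ (m + 1, n - 1)) (τ (m, n)) (hτ _) (hτ _) (hτ _) (hτ _) (hτ _) (hτ _),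
        show (τ (m + 1, n - 1)) * (τ (m, n)) * (1 + (σ (m, n) * (starRingEnd ℂ) (σ (m + 1, n - 1))).re / ((τ (m, n)) * (τ (m + 1, n - 1))))
          = (τ (m, n)) * (τ (m + 1, n - 1)) + (σ (m, n) * (starRingEnd ℂ) (σ (m + 1, n - 1))).re from by
            field_simp [(hτ (m, n)).ne', (hτ (m + 1, n - 1)).ne']]
    have hD5 : (τ (m, n) : ℂ) * (τ (m - 1, n) : ℂ) * (τ (m + 1, n) : ℂ) * (τ (m, n - 1) : ℂ) * (τ (m, n + 1) : ℂ) ≠ 0 :=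
      mul_ne_zero (mul_ne_zero (mul_ne_zero (mul_ne_zero (hτcne (m, n)) (hτcne (m - 1, n)))
        (hτcne (m + 1, n))) (hτcne (m, n - 1))) (hτcne (m, n + 1))
    have hC : (J₁ : ℂ) * ((Real.exp (a + b) : ℝ) : ℂ) * ((τ (m, n) : ℂ) * (τ (m - 1, n - 1) : ℂ) + -((σ (m, n)) * (ρ (m - 1, n - 1)) + (ρ (m, n)) * (σ (m - 1, n - 1))) / 2) / ((τ (m - 1, n) : ℂ) * (τ (m, n - 1) : ℂ)) + (J₂ : ℂ) * ((Real.exp (a - b) : ℝ) : ℂ) * ((τ (m, n) : ℂ) * (τ (m - 1, n + 1) : ℂ) + -((σ (m, n)) * (ρ (m - 1, n + 1)) + (ρ (m, n)) * (σ (m - 1, n + 1))) / 2) / ((τ (m - 1, n) : ℂ) * (τ (m, n + 1) : ℂ)) - (J₁ : ℂ) * ((Real.exp (a + b) : ℝ) : ℂ) * ((τ (m, n) : ℂ) * (τ (m + 1, n + 1) : ℂ) + -((σ (m, n)) * (ρ (m + 1, n + 1)) + (ρ (m, n)) * (σ (m + 1, n + 1))) / 2) / ((τ (m, n + 1) : ℂ)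 * (τ (m + 1, n) : ℂ)) - (J₂ : ℂ) * ((Real.exp (a - b) : ℝ) : ℂ) * ((τ (m, n) : ℂ) * (τ (m + 1, n - 1) : ℂ) + -((σ (m, n)) * (ρ (m + 1, n - 1)) + (ρ (m, n)) * (σ (m + 1, n - 1))) / 2) / ((τ (m, n - 1) : ℂ) * (τ (m + 1, n) : ℂ)) = 0 := by
      rw [hκ,
        show (J₁ : ℂ) * ((Real.exp (a + b) : ℝ) : ℂ) * ((τ (m, n) : ℂ) * (τ (m - 1, n - 1) : ℂ) + -((σ (m, n)) * (ρ (m - 1, n - 1)) + (ρ (m, n)) * (σ (m - 1, n - 1))) / 2) / ((τ (m - 1, n) : ℂ) * (τ (m, n - 1) : ℂ))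
            = (J₁ : ℂ) * ((Real.exp (a + b) : ℝ) : ℂ) * ((τ (m, n) : ℂ) * (τ (m - 1, n - 1) : ℂ) + -((σ (m, n)) * (ρ (m - 1, n - 1)) + (ρ (m, n)) * (σ (m - 1, n - 1))) / 2) * ((τ (m, n) : ℂ) * (τ (m + 1, n) : ℂ) * (τ (m, n + 1) : ℂ)) / ((τ (m, n) : ℂ) * (τ (m - 1, n) : ℂ) * (τ (m + 1, n) : ℂ) * (τ (m, n - 1) : ℂ) * (τ (m, n + 1) : ℂ)) from by
          rw [div_eq_div_iff (mul_ne_zero (hτcne _) (hτcne _)) hD5]; ring,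
        show -μ ^ 2 * ((J₁ : ℂ) * ((Real.exp (a + b) : ℝ) : ℂ)) * ((τ (m, n) : ℂ) * (τ (m - 1, n + 1) : ℂ) + -((σ (m, n)) * (ρ (m - 1, n + 1)) + (ρ (m, n)) * (σ (m - 1, n + 1))) / 2) / ((τ (m - 1, n) : ℂ) * (τ (m, n + 1) : ℂ))
            = -μ ^ 2 * ((J₁ : ℂ) * ((Real.exp (a + b) : ℝ) : ℂ)) * ((τ (m, n) : ℂ) * (τ (m - 1, n + 1) : ℂ) + -((σ (m, n)) * (ρ (m - 1, n + 1)) + (ρ (m, n)) * (σ (m - 1, n + 1))) / 2) * ((τ (m, n) : ℂ) * (τ (m + 1, n) : ℂ) * (τ (m, n - 1) : ℂ)) / ((τ (m, n) : ℂ) * (τ (m - 1, n) : ℂ) * (τ (m + 1, n) : ℂ) * (τ (m, n - 1) : ℂ) * (τ (m, n + 1) : ℂ)) from by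
          rw [div_eq_div_iff (mul_ne_zero (hτcne _) (hτcne _)) hD5]; ring,
        show (J₁ : ℂ) * ((Real.exp (a + b) : ℝ) : ℂ) * ((τ (m, n) : ℂ) * (τ (m + 1, n + 1) : ℂ) + -((σ (m, n)) * (ρ (m + 1, n + 1)) + (ρ (m, n)) * (σ (m + 1, n + 1))) / 2) / ((τ (m, n + 1) : ℂ) * (τ (m + 1, n) : ℂ))
            = (J₁ : ℂ) * ((Real.exp (a + b) : ℝ) : ℂ) * ((τ (m, n) : ℂ) * (τ (m + 1, n + 1) : ℂ) + -((σ (m, n)) * (ρ (m + 1, n + 1)) + (ρ (m, n)) * (σ (m + 1, n + 1))) / 2) * ((τ (m, n) : ℂ) * (τ (m - 1, n) : ℂ) * (τ (m, n - 1) : ℂ)) / ((τ (m, n) : ℂ) * (τ (m - 1, n) : ℂ) * (τ (m + 1, n) : ℂ) * (τ (m, n - 1) : ℂ) * (τ (m, n + 1) : ℂ)) from by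
          rw [div_eq_div_iff (mul_ne_zero (hτcne _) (hτcne _)) hD5]; ring,
        show -μ ^ 2 * ((J₁ : ℂ) * ((Real.exp (a + b) : ℝ) : ℂ)) * ((τ (m, n) : ℂ) * (τ (m + 1, n - 1) : ℂ) + -((σ (m, n)) * (ρ (m + 1, n - 1)) + (ρ (m, n)) * (σ (m + 1, n - 1))) / 2) / ((τ (m, n - 1) : ℂ) * (τ (m + 1, n) : ℂ))
            = -μ ^ 2 * ((J₁ : ℂ) * ((Real.exp (a + b) : ℝ) : ℂ)) * ((τ (m, n) : ℂ) * (τ (m + 1, n - 1) : ℂ) + -((σ (m, n)) * (ρ (m + 1, n - 1)) + (ρ (m, n)) * (σ (m + 1, n - 1))) / 2) * ((τ (m, n) : ℂ) * (τ (m - 1, n) : ℂ) * (τ (m, n + 1) : ℂ)) / ((τ (m, n) : ℂ) * (τ (m - 1, n) : ℂ) * (τ (m + 1, n) : ℂ) * (τ (m, n - 1) : ℂ) * (τ (m, n + 1) : ℂ)) from by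
          rw [div_eq_div_iff (mul_ne_zero (hτcne _) (hτcne _)) hD5]; ring,
        ← add_div, div_sub_div_same, div_sub_div_same, div_eq_zero_iff]
      exact Or.inl (by linear_combination ((J₁ : ℂ) * ((Real.exp (a + b) : ℝ) : ℂ)) * hGc)
    rw [TR, TU, TL, TD, ← Complex.ofReal_eq_zero]
    push_cast [-Complex.ofReal_exp]
    rw [hre (m - 1, n - 1), hre (m - 1, n + 1), hre (m + 1, n + 1), hre (m + 1, n - 1)]
    linear_combination hC
  · have VR : (J₁ * Real.exp (u (m, n) - u (m - 1, n - 1))) • crossProduct (phi (q (m, n))) (phi (q (m - 1, n - 1)))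
        = (J₁ * Real.exp (a + b) * ((τ (m, n)) * (τ (m - 1, n - 1))) / ((τ (m - 1, n)) * (τ (m, n - 1)))) • ![(q (m, n)).im - (q (m - 1, n - 1)).im, (q (m - 1, n - 1)).re - (q (m, n)).re, (q (m, n)).re * (q (m - 1, n - 1)).im - (q (m, n)).im * (q (m - 1, n - 1)).re] := by
      rw [cross_phi, smul_smul]
      congr 1
      rw [hp0, hpR, eR, inv_eq_one_div,
        coeff_eq J₁ (a + b) 1 (τ (m - 1, n)) (τ (m + 1, n)) (τ (m - 1 - 1, n - 1)) (τ (m, n - 1)) (τ (m, n)) (τ (m - 1, n - 1))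
          (hτ _) (hτ _) (hτ _) (hτ _) (hτ _) (hτ _), mul_one]
    have VU : (J₂ * Real.exp (u (m, n) - u (m - 1, n + 1))) • crossProduct (phi (q (m, n))) (phi (q (m - 1, n + 1)))
        = (J₂ * Real.exp (a - b) * ((τ (m, n)) * (τ (m - 1, n + 1))) / ((τ (m - 1, n)) * (τ (m, n + 1)))) • ![(q (m, n)).im - (q (m - 1, n + 1)).im, (q (m - 1, n + 1)).re - (q (m, n)).re, (q (m, n)).re * (q (m - 1, n + 1)).im - (q (m, n)).im * (q (m - 1, n + 1)).re] := by
      rw [cross_phi, smul_smul]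
      congr 1
      rw [hp0, hpU, eU, inv_eq_one_div,
        coeff_eq J₂ (a - b) 1 (τ (m - 1, n)) (τ (m + 1, n)) (τ (m - 1 - 1, n + 1)) (τ (m, n + 1)) (τ (m, n)) (τ (m - 1, n + 1))
          (hτ _) (hτ _) (hτ _) (hτ _) (hτ _) (hτ _), mul_one]
    have VL : (J₁ * Real.exp (-(u (m, n) - u (m + 1, n + 1)))) • crossProduct (phi (q (m, n))) (phi (q (m + 1, n + 1)))
        = (J₁ * Real.exp (a + b) * ((τ (m + 1, n + 1)) * (τ (m, n))) / ((τ (m, n + 1)) * (τ (m + 1, n)))) • ![(q (m, n)).im - (q (m + 1, n + 1)).im, (q (m + 1, n + 1)).re - (q (m, n)).re, (q (m, n)).re * (q (m + 1, n + 1)).im - (q (m, n)).im * (q (m + 1, n + 1)).re] := by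
      rw [cross_phi, smul_smul]
      congr 1
      rw [hp0, hpL, eL,
        mul_comm (Real.sqrt ((τ (m - 1, n)) * (τ (m + 1, n)) / (τ (m, n)) ^ 2)) (Real.sqrt ((τ (m, n + 1)) * (τ (m + 1 + 1, n + 1)) / (τ (m + 1, n + 1)) ^ 2)),
        inv_eq_one_div,
        coeff_eq J₁ (a + b) 1 (τ (m, n + 1)) (τ (m + 1 + 1, n + 1)) (τ (m - 1, n)) (τ (m + 1, n)) (τ (m + 1, n + 1)) (τ (m, n))
          (hτ _) (hτ _) (hτ _) (hτ _) (hτ _) (hτ _), mul_one]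
    have VD : (J₂ * Real.exp (-(u (m, n) - u (m + 1, n - 1)))) • crossProduct (phi (q (m, n))) (phi (q (m + 1, n - 1)))
        = (J₂ * Real.exp (a - b) * ((τ (m + 1, n - 1)) * (τ (m, n))) / ((τ (m, n - 1)) * (τ (m + 1, n)))) • ![(q (m, n)).im - (q (m + 1, n - 1)).im, (q (m + 1, n - 1)).re - (q (m, n)).re, (q (m, n)).re * (q (m + 1, n - 1)).im - (q (m, n)).im * (q (m + 1, n - 1)).re] := by
      rw [cross_phi, smul_smul]
      congr 1
      rw [hp0, hpD, eD,
        mul_comm (Real.sqrt ((τ (m - 1, n)) * (τ (m + 1, n)) / (τ (m, n)) ^ 2)) (Real.sqrt ((τ (m, n - 1)) * (τ (m + 1 + 1, n - 1)) / (τ (m + 1, n - 1)) ^ 2)),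
        inv_eq_one_div,
        coeff_eq J₂ (a - b) 1 (τ (m, n - 1)) (τ (m + 1 + 1, n - 1)) (τ (m - 1, n)) (τ (m + 1, n)) (τ (m + 1, n - 1)) (τ (m, n))
          (hτ _) (hτ _) (hτ _) (hτ _) (hτ _) (hτ _), mul_one]
    have hD4 : (τ (m - 1, n) : ℂ) * (τ (m + 1, n) : ℂ) * (τ (m, n - 1) : ℂ) * (τ (m, n + 1) : ℂ) ≠ 0 :=
      mul_ne_zero (mul_ne_zero (mul_ne_zero (hτcne (m - 1, n)) (hτcne (m + 1, n)))
        (hτcne (m, n - 1))) (hτcne (m, n + 1))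
    have hZcp : (J₁ : ℂ) * ((Real.exp (a + b) : ℝ) : ℂ) * ((τ (m, n) : ℂ) * (τ (m - 1, n - 1) : ℂ)) / ((τ (m - 1, n) : ℂ) * (τ (m, n - 1) : ℂ)) * ((σ (m - 1, n - 1)) / (τ (m - 1, n - 1) : ℂ) - (σ (m, n)) / (τ (m, n) : ℂ)) + (J₂ : ℂ) * ((Real.exp (a - b) : ℝ) : ℂ) * ((τ (m, n) : ℂ) * (τ (m - 1, n + 1) : ℂ)) / ((τ (m - 1, n) : ℂ) * (τ (m, n + 1) : ℂ)) * ((σ (m - 1, n + 1)) / (τ (m - 1, n + 1) : ℂ) - (σ (m, n)) / (τ (m, n) : ℂ)) + (J₁ : ℂ) * ((Real.exp (a + b) : ℝ) : ℂ) * ((τ (m + 1, n + 1) : ℂ) * (τ (m, n) : ℂ)) / ((τ (m, n + 1) : ℂ) * (τ (m + 1, n) : ℂ)) * ((σ (m + 1, n + 1)) / (τ (m + 1, n + 1) : ℂ) - (σ (m, n)) / (τ (m, n) : ℂ)) + (J₂ : ℂ) * ((Real.exp (a - b) : ℝ) : ℂ) * ((τ (m + 1, n - 1) : ℂ) * (τ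 (m, n) : ℂ)) / ((τ (m, n - 1) : ℂ) * (τ (m + 1, n) : ℂ)) * ((σ (m + 1, n - 1)) / (τ (m + 1, n - 1) : ℂ) - (σ (m, n)) / (τ (m, n) : ℂ)) = 0 := by
      rw [hκ,
        div_sub_div (σ (m - 1, n - 1)) (σ (m, n)) (hτcne (m - 1, n - 1)) (hτcne (m, n)),
        div_sub_div (σ (m - 1, n + 1)) (σ (m, n)) (hτcne (m - 1, n + 1)) (hτcne (m, n)),
        div_sub_div (σ (m + 1, n + 1)) (σ (m, n)) (hτcne (m + 1, n + 1)) (hτcne (m, n)),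
        div_sub_div (σ (m + 1, n - 1)) (σ (m, n)) (hτcne (m + 1, n - 1)) (hτcne (m, n)),
        div_mul_div_comm, div_mul_div_comm, div_mul_div_comm, div_mul_div_comm,
        show (J₁ : ℂ) * ((Real.exp (a + b) : ℝ) : ℂ) * ((τ (m, n) : ℂ) * (τ (m - 1, n - 1) : ℂ)) * (((σ (m - 1, n - 1)) * (τ (m, n) : ℂ) - (τ (m - 1, n - 1) : ℂ) * (σ (m, n)))) / ((τ (m - 1, n) : ℂ) * (τ (m, n - 1) : ℂ) * ((τ (m - 1, n - 1) : ℂ) * (τ (m, n) : ℂ)))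
            = (J₁ : ℂ) * ((Real.exp (a + b) : ℝ) : ℂ) * (((σ (m - 1, n - 1)) * (τ (m, n) : ℂ) - (τ (m - 1, n - 1) : ℂ) * (σ (m, n))) * ((τ (m + 1, n) : ℂ) * (τ (m, n + 1) : ℂ))) / ((τ (m - 1, n) : ℂ) * (τ (m + 1, n) : ℂ) * (τ (m, n - 1) : ℂ) * (τ (m, n + 1) : ℂ)) from by
          rw [div_eq_div_iff (mul_ne_zero (mul_ne_zero (hτcne _) (hτcne _)) (mul_ne_zero (hτcne _) (hτcne _))) hD4]; ring,
        show -μ ^ 2 * ((J₁ : ℂ) * ((Real.exp (a + b) : ℝ) : ℂ)) * ((τ (m, n) : ℂ) * (τ (m - 1, n + 1) : ℂ)) * (((σ (m - 1, n + 1)) * (τ (m, n) : ℂ) - (τ (m - 1, n + 1) : ℂ) * (σ (m, n)))) / ((τ (m - 1, n) : ℂ) * (τ (m, n + 1) : ℂ) * ((τ (m - 1, n + 1) : ℂ) * (τ (m, n) : ℂ)))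
            = -μ ^ 2 * ((J₁ : ℂ) * ((Real.exp (a + b) : ℝ) : ℂ)) * (((σ (m - 1, n + 1)) * (τ (m, n) : ℂ) - (τ (m - 1, n + 1) : ℂ) * (σ (m, n))) * ((τ (m + 1, n) : ℂ) * (τ (m, n - 1) : ℂ))) / ((τ (m - 1, n) : ℂ) * (τ (m + 1, n) : ℂ) * (τ (m, n - 1) : ℂ) * (τ (m, n + 1) : ℂ)) from by
          rw [div_eq_div_iff (mul_ne_zero (mul_ne_zero (hτcne _) (hτcne _)) (mul_ne_zero (hτcne _) (hτcne _))) hD4]; ring,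
        show (J₁ : ℂ) * ((Real.exp (a + b) : ℝ) : ℂ) * ((τ (m + 1, n + 1) : ℂ) * (τ (m, n) : ℂ)) * (((σ (m + 1, n + 1)) * (τ (m, n) : ℂ) - (τ (m + 1, n + 1) : ℂ) * (σ (m, n)))) / ((τ (m, n + 1) : ℂ) * (τ (m + 1, n) : ℂ) * ((τ (m + 1, n + 1) : ℂ) * (τ (m, n) : ℂ)))
            = (J₁ : ℂ) * ((Real.exp (a + b) : ℝ) : ℂ) * (((σ (m + 1, n + 1)) * (τ (m, n) : ℂ) - (τ (m + 1, n + 1) : ℂ) * (σ (m, n))) * ((τ (m - 1, n) : ℂ) * (τ (m, n - 1) : ℂ))) / ((τ (m - 1, n) : ℂ) * (τ (m + 1, n) : ℂ) * (τ (m, n - 1) : ℂ) * (τ (m, n + 1) : ℂ)) from by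
          rw [div_eq_div_iff (mul_ne_zero (mul_ne_zero (hτcne _) (hτcne _)) (mul_ne_zero (hτcne _) (hτcne _))) hD4]; ring,
        show -μ ^ 2 * ((J₁ : ℂ) * ((Real.exp (a + b) : ℝ) : ℂ)) * ((τ (m + 1, n - 1) : ℂ) * (τ (m, n) : ℂ)) * (((σ (m + 1, n - 1)) * (τ (m, n) : ℂ) - (τ (m + 1, n - 1) : ℂ) * (σ (m, n)))) / ((τ (m, n - 1) : ℂ) * (τ (m + 1, n) : ℂ) * ((τ (m + 1, n - 1) : ℂ) * (τ (m, n) : ℂ)))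
            = -μ ^ 2 * ((J₁ : ℂ) * ((Real.exp (a + b) : ℝ) : ℂ)) * (((σ (m + 1, n - 1)) * (τ (m, n) : ℂ) - (τ (m + 1, n - 1) : ℂ) * (σ (m, n))) * ((τ (m - 1, n) : ℂ) * (τ (m, n + 1) : ℂ))) / ((τ (m - 1, n) : ℂ) * (τ (m + 1, n) : ℂ) * (τ (m, n - 1) : ℂ) * (τ (m, n + 1) : ℂ)) from by
          rw [div_eq_div_iff (mul_ne_zero (mul_ne_zero (hτcne _) (hτcne _)) (mul_ne_zero (hτcne _) (hτcne _))) hD4]; ring,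
        ← add_div, ← add_div, ← add_div, div_eq_zero_iff]
      exact Or.inl (by linear_combination ((J₁ : ℂ) * ((Real.exp (a + b) : ℝ) : ℂ)) * hGv)
    have hZc : (((J₁ * Real.exp (a + b) * ((τ (m, n)) * (τ (m - 1, n - 1))) / ((τ (m - 1, n)) * (τ (m, n - 1))) : ℝ)) : ℂ) * (q (m - 1, n - 1) - q (m, n)) + (((J₂ * Real.exp (a - b) * ((τ (m, n)) * (τ (m - 1, n + 1))) / ((τ (m - 1, n)) * (τ (m, n + 1))) : ℝ)) : ℂ) * (q (m - 1, n + 1) - q (m, n)) + (((J₁ * Real.exp (a + b) * ((τ (m + 1, n + 1)) * (τ (m, n))) / ((τ (m, n + 1)) * (τ (m + 1, n))) : ℝ)) : ℂ) * (q (m + 1, n + 1) - q (m, n)) + (((J₂ * Real.exp (a - b) * ((τ (m + 1, n - 1)) * (τ (m, n))) / ((τ (m, n - 1)) * (τ (m + 1, n))) : ℝ)) : ℂ) * (q (m + 1, n - 1) - q (m, n)) = 0 := by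
      rw [hq (m - 1, n - 1), hq (m - 1, n + 1), hq (m + 1, n + 1), hq (m + 1, n - 1), hq (m, n)]
      push_cast [-Complex.ofReal_exp]
      linear_combination hZcp
    have hre1 := congrArg Complex.re hZc
    have him1 := congrArg Complex.im hZc
    simp only [Complex.add_re, Complex.add_im, Complex.re_ofReal_mul, Complex.im_ofReal_mul,
      Complex.sub_re, Complex.sub_im, Complex.zero_re, Complex.zero_im] at hre1 him1
    have hcm := congrArg (fun z => (starRingEnd ℂ) (q (m, n)) * z) hZc
    simp only [mul_zero, mul_add] at hcm
    have him2 := congrArg Complex.im hcm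
    simp only [Complex.add_im, Complex.mul_im, Complex.mul_re, Complex.re_ofReal_mul,
      Complex.im_ofReal_mul, Complex.ofReal_re, Complex.ofReal_im, Complex.sub_re,
      Complex.sub_im, Complex.conj_re, Complex.conj_im, Complex.zero_im] at him2
    rw [VR, VU, VL, VD]
    funext i
    fin_cases i
    · simp only [Fin.zero_eta, Fin.isValue, Pi.add_apply, Pi.smul_apply, smul_eq_mul,
        Matrix.cons_val_zero, Pi.zero_apply]
      linear_combination -him1
    · simp only [Fin.mk_one, Fin.isValue, Pi.add_apply, Pi.smul_apply, smul_eq_mul,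
        Matrix.cons_val_one, Matrix.head_cons, Pi.zero_apply, Matrix.cons_val_zero]
      linear_combination hre1
    · simp only [Fin.isValue, Pi.add_apply, Pi.smul_apply, smul_eq_mul,
        show (⟨2, by omega⟩ : Fin 3) = (2 : Fin 3) from rfl, Matrix.cons_val_two,
        Matrix.tail_cons, Matrix.head_cons, Pi.zero_apply]
      linear_combination him2
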